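/- arXiv:1810.11344 — 6 statements merged into one kernel-verified Lean document; each statement's English description precedes it below -/
import Mathlib

section
/- For all θ > 0, θ* > 0, w1* ∈ (0.5,1), letting w2* = 1 − w1*, the quantity ∫ [e^{yθ}/(e^{yθ} + e^{−yθ})]·(w1*·φ(y−θ*) + w2*·φ(y+θ*)) dy is strictly greater than 1/2, where φ is the standard Gaussian density. -/
open MeasureTheory Real

noncomputable def gauss (x : ℝ) : ℝ := (Real.sqrt (2 * Real.pi))⁻¹ * Real.exp (-(x ^ 2) / 2)

lemma gauss_neg (x : ℝ) : gauss (-x) = gauss x := by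
  unfold gauss; ring_nf

lemma integrable_gauss : Integrable gauss := by
  unfold gauss
  apply Integrable.const_mul
  have h := integrable_exp_neg_mul_sq (by norm_num : (0:ℝ) < 1/2)
  refine h.congr ?_
  filter_upwards with x
  ring_nf

lemma integral_gauss : ∫ x, gauss x = 1 := by
  unfold gauss
  rw [integral_const_mul]
  have h : (fun x : ℝ => Real.exp (-(x ^ 2) / 2)) = fun x : ℝ => Real.exp (-(1/2) * x ^ 2) := by
    funext x; ring_nf
  rw [h, integral_gaussian]
  have : Real.pi / (1/2) = 2 * Real.pi := by ring
  rw [this]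
  rw [inv_mul_cancel₀]
  positivity

lemma integrable_gauss_sub (c : ℝ) : Integrable (fun y => gauss (y - c)) :=
  integrable_gauss.comp_sub_right c

lemma integrable_gauss_add (c : ℝ) : Integrable (fun y => gauss (y + c)) := by
  simpa using integrable_gauss.comp_sub_right (-c)

lemma integral_gauss_sub (c : ℝ) : ∫ y, gauss (y - c) = 1 := by
  rw [integral_sub_right_eq_self gauss c, integral_gauss]

lemma integral_gauss_add (c : ℝ) : ∫ y, gauss (y + c) = 1 := by
  have := integral_sub_right_eq_self (μ := volume) gauss (-c)
  simpa [integral_gauss] using this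

theorem stmt_1 (θ θs w1s : ℝ) (hθ : 0 < θ) (hθs : 0 < θs)
    (hw1s : w1s ∈ Set.Ioo (1/2 : ℝ) 1) :
    (1/2 : ℝ) < ∫ y : ℝ,
      (Real.exp (y * θ) / (Real.exp (y * θ) + Real.exp (-(y * θ)))) *
      (w1s * gauss (y - θs) + (1 - w1s) * gauss (y + θs)) := by
  obtain ⟨hw1, hw2⟩ := hw1s
  set σ : ℝ → ℝ := fun y => Real.exp (y * θ) / (Real.exp (y * θ) + Real.exp (-(y * θ))) with hσdef
  have hden : ∀ y : ℝ, 0 < Real.exp (y * θ) + Real.exp (-(y * θ)) := by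
    intro y; positivity
  have hσ0 : ∀ y, 0 ≤ σ y := fun y => div_nonneg (Real.exp_nonneg _) (hden y).le
  have hσ1 : ∀ y, σ y ≤ 1 := by
    intro y
    rw [hσdef]
    exact div_le_one_of_le₀ (le_add_of_nonneg_right (Real.exp_nonneg _)) (hden y).le
  have hσcont : Continuous σ := by
    apply Continuous.div (by fun_prop) (by fun_prop)
    intro y; exact (hden y).ne'
  -- the key nonnegative function
  set k : ℝ → ℝ := fun y => (σ y - 1/2) * (gauss (y - θs) - gauss (y + θs)) with hkdef
  -- σ(-y) = 1 - σ y
  have hσneg : ∀ y, σ (-y) = 1 - σ y := by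
    intro y
    rw [hσdef]
    simp only [neg_mul]
    field_simp
    ring_nf
  -- k is nonneg
  have hσhalf : ∀ y : ℝ, 0 < y → 1/2 < σ y := by
    intro y hy
    rw [hσdef, lt_div_iff₀ (hden y)]
    have : Real.exp (-(y * θ)) < Real.exp (y * θ) :=
      Real.exp_lt_exp.mpr (by nlinarith)
    linarith
  have hgauss_lt : ∀ y : ℝ, 0 < y → gauss (y + θs) < gauss (y - θs) := by
    intro y hy
    unfold gauss
    apply mul_lt_mul_of_pos_left _ (by positivity)
    apply Real.exp_lt_exp.mpr
    nlinarith
  have hk0 : ∀ y, 0 ≤ k y := by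
    intro y
    rcases lt_trichotomy y 0 with h | h | h
    · have h1 : σ y < 1/2 := by
        have := hσhalf (-y) (by linarith)
        rw [hσneg] at this; linarith
      have h2 : gauss (y - θs) < gauss (y + θs) := by
        have := hgauss_lt (-y) (by linarith)
        rw [show (-y + θs) = -(y - θs) by ring, show (-y - θs) = -(y + θs) by ring,
          gauss_neg, gauss_neg] at this
        exact this
      rw [hkdef]
      have : (0:ℝ) ≤ (1/2 - σ y) * (gauss (y + θs) - gauss (y - θs)) := by
        apply mul_nonneg <;> linarith
      nlinarith
    · norm_num [hkdef, h, hσdef]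
    · have h1 := hσhalf y h
      have h2 := hgauss_lt y h
      apply mul_nonneg <;> linarith
  have hkpos : ∀ y : ℝ, 0 < y → 0 < k y := by
    intro y hy
    have h1 := hσhalf y hy
    have h2 := hgauss_lt y hy
    apply mul_pos <;> linarith
  -- integrability
  have hkint : Integrable k := by
    apply Integrable.bdd_mul ((integrable_gauss_sub θs).sub (integrable_gauss_add θs))
      ((hσcont.sub continuous_const).aestronglyMeasurable)
    refine ae_of_all _ (fun y => (?_ : ‖_‖ ≤ (1:ℝ)))
    rw [Real.norm_eq_abs, abs_le, Pi.sub_apply]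
    constructor
    · linarith [hσ0 y]
    · linarith [hσ1 y]
  have hKpos : 0 < ∫ y, k y := by
    rw [integral_pos_iff_support_of_nonneg hk0 hkint]
    have hsub : Set.Ioi (0:ℝ) ⊆ Function.support k := fun y hy => (hkpos y hy).ne'
    calc (0:ENNReal) < ⊤ := by simp
    _ = volume (Set.Ioi (0:ℝ)) := Real.volume_Ioi.symm
    _ ≤ volume (Function.support k) := measure_mono hsub
  -- main integrand
  set g : ℝ → ℝ := fun y => σ y * (w1s * gauss (y - θs) + (1 - w1s) * gauss (y + θs)) with hgdef
  have hgint : Integrable g := by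
    apply Integrable.bdd_mul
      (((integrable_gauss_sub θs).const_mul w1s).add ((integrable_gauss_add θs).const_mul (1 - w1s)))
      hσcont.aestronglyMeasurable
    refine ae_of_all _ (fun y => (?_ : ‖_‖ ≤ (1:ℝ)))
    rw [Real.norm_eq_abs, abs_le]
    exact ⟨by linarith [hσ0 y], hσ1 y⟩
  -- symmetrization identity (pointwise)
  have hpoint : ∀ y, g y + g (-y)
      = (1/2) * (gauss (y - θs) + gauss (y + θs)) + (2 * w1s - 1) * k y := by
    intro y
    rw [hgdef]
    simp only
    rw [hσneg y, show (-y - θs) = -(y + θs) by ring, show (-y + θs) = -(y - θs) by ring,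
      gauss_neg, gauss_neg, hkdef]
    ring
  -- integral identity
  have hneg : ∫ y, g (-y) = ∫ y, g y := integral_neg_eq_self g volume
  have hgnegint : Integrable (fun y => g (-y)) := hgint.comp_neg
  have hsum : ∫ y, (g y + g (-y))
      = (1/2) * ((∫ y, gauss (y - θs)) + ∫ y, gauss (y + θs)) + (2 * w1s - 1) * ∫ y, k y := by
    rw [show (fun y => g y + g (-y))
        = fun y => (1/2) * (gauss (y - θs) + gauss (y + θs)) + (2 * w1s - 1) * k y
      from funext hpoint]
    have h1 : Integrable (fun y : ℝ => (1/2 : ℝ) * (gauss (y - θs) + gauss (y + θs))) := by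
      exact ((integrable_gauss_sub θs).add (integrable_gauss_add θs)).const_mul _
    have h2 : Integrable (fun y : ℝ => (2 * w1s - 1) * k y) := hkint.const_mul _
    rw [integral_add h1 h2, integral_const_mul, integral_const_mul,
      integral_add (integrable_gauss_sub θs) (integrable_gauss_add θs)]
  have hsum2 : ∫ y, (g y + g (-y)) = 2 * ∫ y, g y := by
    rw [integral_add hgint hgnegint, hneg]; ring
  rw [integral_gauss_sub, integral_gauss_add] at hsum
  have hfinal : 2 * ∫ y, g y = 1 + (2 * w1s - 1) * ∫ y, k y := by
    rw [← hsum2, hsum]; ring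
  have hIg : (∫ y : ℝ,
      (Real.exp (y * θ) / (Real.exp (y * θ) + Real.exp (-(y * θ)))) *
      (w1s * gauss (y - θs) + (1 - w1s) * gauss (y + θs))) = ∫ y, g y := rfl
  rw [hIg]
  nlinarith [hKpos]
end

section
/- For all w1 ∈ (1/2, 1], w1* ∈ (1/2, 1) with w1 > w1*, and all integers k ≥ 2 (indeed k > 1), setting γ = (2w1* − 1)/(2w1 − 1) ∈ (0,1), the inequality (w1 − w1*)·(1 + 2γ)^{2k} + (w1* + w1 − 1)·(2γ − 1)^{2k} − (2w1 − 1) > 0 holds. -/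
lemma aux_stmt_6 (g : ℝ) (h0 : 0 < g) (h1 : g < 1) (k : ℕ) (hk : 2 ≤ k) :
    2 < (1 - g) * (1 + 2 * g) ^ (2 * k) + (1 + g) * (2 * g - 1) ^ (2 * k) := by
  induction k, hk using Nat.le_induction with
  | base =>
    norm_num
    nlinarith [mul_pos (mul_pos h0 h0) (mul_pos (sub_pos.2 h1) (by linarith : (0:ℝ) < 1 + g)),
      sq_nonneg g, sq_nonneg (g*g)]
  | succ n hn ih =>
    have hA : (2 * g - 1) ^ (2 * n) ≤ (1 + 2 * g) ^ (2 * n) := by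
      rw [pow_mul, pow_mul]
      exact pow_le_pow_left₀ (sq_nonneg _) (by nlinarith) n
    have hB : (0:ℝ) ≤ (2 * g - 1) ^ (2 * n) := by rw [pow_mul]; positivity
    have key : 0 ≤ 4 * g * (1 - g) * (1 + g) *
        ((1 + 2 * g) ^ (2 * n) - (2 * g - 1) ^ (2 * n)) := by
      have h2 := mul_pos (mul_pos h0 (sub_pos.2 h1)) (show (0:ℝ) < 1 + g by linarith)
      have : (0:ℝ) ≤ 4 * g * (1 - g) * (1 + g) := by nlinarith [h2]
      exact mul_nonneg this (by linarith)
    have e1 : 2 * (n + 1) = 2 * n + 2 := by ring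
    rw [e1, pow_add, pow_add]
    nlinarith [ih, key]

theorem stmt_6 (w1 w1s : ℝ) (hw1 : w1 ∈ Set.Ioc (1/2 : ℝ) 1)
    (hw1s : w1s ∈ Set.Ioo (1/2 : ℝ) 1) (hgt : w1s < w1) (k : ℕ) (hk : 2 ≤ k) :
    0 < (w1 - w1s) * (1 + 2 * ((2 * w1s - 1) / (2 * w1 - 1))) ^ (2 * k) +
      (w1s + w1 - 1) * (2 * ((2 * w1s - 1) / (2 * w1 - 1)) - 1) ^ (2 * k) -
      (2 * w1 - 1) := by
  obtain ⟨hw1a, hw1b⟩ := hw1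
  obtain ⟨hsa, hsb⟩ := hw1s
  have hden : (0:ℝ) < 2 * w1 - 1 := by linarith
  set g : ℝ := (2 * w1s - 1) / (2 * w1 - 1) with hg
  have hg0 : 0 < g := div_pos (by linarith) hden
  have hg1 : g < 1 := (div_lt_one hden).2 (by linarith)
  have hmul : g * (2 * w1 - 1) = 2 * w1s - 1 := div_mul_cancel₀ _ (ne_of_gt hden)
  have haux := aux_stmt_6 g hg0 hg1 k hk
  have key : 0 < (2 * w1 - 1) *
      ((1 - g) * (1 + 2 * g) ^ (2 * k) + (1 + g) * (2 * g - 1) ^ (2 * k) - 2) :=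
    mul_pos hden (by linarith)
  have e1 : w1 - w1s = (2 * w1 - 1) * (1 - g) / 2 := by
    field_simp
    linarith [hmul]
  have e2 : w1s + w1 - 1 = (2 * w1 - 1) * (1 + g) / 2 := by
    field_simp
    linarith [hmul]
  rw [e1, e2]
  nlinarith [key]
end

section
/- For all real y ≥ 0, 0 < θ* ≤ θ, and w1 ∈ [1/2, 1) with w2 = 1 − w1, the inequality (w2/w1)^{θ*/(2θ)}·e^{yθ*} + (w1/w2)^{θ*/(2θ)}·e^{−yθ*} ≥ 2·(w1·e^{−yθ*} + w2·e^{yθ*}) holds. -/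
theorem stmt_7 (y θ θs w1 : ℝ) (hy : 0 ≤ y) (hθs : 0 < θs) (hθ : θs ≤ θ)
    (hw1 : w1 ∈ Set.Ico (1/2 : ℝ) 1) :
    2 * (w1 * Real.exp (-(y * θs)) + (1 - w1) * Real.exp (y * θs)) ≤
      ((1 - w1) / w1) ^ (θs / (2 * θ)) * Real.exp (y * θs) +
      (w1 / (1 - w1)) ^ (θs / (2 * θ)) * Real.exp (-(y * θs)) := by
  obtain ⟨hw1l, hw1r⟩ := hw1
  have hw1pos : 0 < w1 := by linarith
  have hw2pos : 0 < 1 - w1 := by linarith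
  set r : ℝ := (1 - w1) / w1 with hr
  have hrpos : 0 < r := div_pos hw2pos hw1pos
  have hrle1 : r ≤ 1 := by
    rw [hr, div_le_one hw1pos]; linarith
  have hθpos : 0 < θ := lt_of_lt_of_le hθs hθ
  set a : ℝ := θs / (2 * θ) with ha
  have hapos : 0 < a := div_pos hθs (by linarith)
  have hale : a ≤ 1 / 2 := by
    rw [ha, div_le_div_iff₀ (by linarith) (by norm_num)]; linarith
  set x : ℝ := r ^ a with hx
  have hxpos : 0 < x := Real.rpow_pos_of_pos hrpos a
  have hinv : (w1 / (1 - w1)) ^ a = x⁻¹ := by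
    have h1 : w1 / (1 - w1) = r⁻¹ := by rw [hr, inv_div]
    rw [h1, Real.inv_rpow hrpos.le, hx]
  -- x ≥ 2*(1-w1)
  have hsq : 2 * (1 - w1) ≤ Real.sqrt r := by
    rw [Real.le_sqrt (by linarith)]
    rw [hr, le_div_iff₀ hw1pos]
    nlinarith [sq_nonneg (1 - 2 * w1)]
    exact hrpos.le
  have hx2 : 2 * (1 - w1) ≤ x := by
    have h12 : r ^ ((1:ℝ)/2) ≤ r ^ a :=
      Real.rpow_le_rpow_of_exponent_ge hrpos hrle1 hale
    have : Real.sqrt r = r ^ ((1:ℝ)/2) := Real.sqrt_eq_rpow r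
    linarith
  -- x + x⁻¹ ≥ 2
  have hamgm : 2 ≤ x + x⁻¹ := by
    have hxi : x * x⁻¹ = 1 := mul_inv_cancel₀ hxpos.ne'
    nlinarith [sq_nonneg (x - 1), inv_pos.mpr hxpos]
  set E : ℝ := Real.exp (y * θs) with hE
  set F : ℝ := Real.exp (-(y * θs)) with hF
  have hFpos : 0 < F := Real.exp_pos _
  have hFE : F ≤ E := Real.exp_le_exp.mpr (by nlinarith)
  rw [hinv]
  nlinarith [mul_nonneg (by linarith : (0:ℝ) ≤ x - 2 * (1 - w1)) (by linarith : (0:ℝ) ≤ E - F),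
    mul_nonneg (by linarith : (0:ℝ) ≤ x + x⁻¹ - 2) hFpos.le]
end

section
/- Let θ* > 0, w1* ∈ (1/2, 1), w2* = 1 − w1*. For all y > 0 and w1 ∈ (1/2, w1*), setting γ = (2w1* − 1)/(2w1 − 1) > 1, the inequality (w1* + w1 − 1)·(e^{yθ*(1−γ)} − e^{−yθ*(1−γ)}) + (w1* − w1)·(e^{yθ*(1+γ)} − e^{−yθ*(1+γ)}) > 0 holds. -/
lemma sinh_strictConvexOn : StrictConvexOn ℝ (Set.Ici 0) Real.sinh := by
  apply strictConvexOn_of_deriv2_pos (convex_Ici 0) Real.continuous_sinh.continuousOn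
  intro x hx
  rw [interior_Ici] at hx
  simp only [Function.iterate_succ, Function.iterate_zero, Function.comp_apply, id_eq,
    Real.deriv_sinh, Real.deriv_cosh]
  exact Real.sinh_pos_iff.2 hx

lemma key_sinh {u v : ℝ} (hu : 0 < u) (huv : u < v) : v * Real.sinh u < u * Real.sinh v := by
  have hv : 0 < v := hu.trans huv
  have hlt : u / v < 1 := (div_lt_one hv).2 huv
  have h := sinh_strictConvexOn.2 (Set.self_mem_Ici) (Set.mem_Ici.2 hv.le) hv.ne
    (show (0:ℝ) < 1 - u / v by linarith) (show (0:ℝ) < u / v by positivity)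
    (show (1 - u / v) + u / v = 1 by ring)
  have harg : (1 - u / v) • (0:ℝ) + (u / v) • v = u := by
    rw [smul_zero, zero_add, smul_eq_mul, div_mul_cancel₀ u hv.ne']
  rw [harg, Real.sinh_zero] at h
  have : Real.sinh u < u / v * Real.sinh v := by simpa using h
  calc v * Real.sinh u < v * (u / v * Real.sinh v) := by
        exact (mul_lt_mul_iff_right₀ hv).2 this
    _ = u * Real.sinh v := by field_simp

theorem stmt_12 (θs w1s w1 y : ℝ) (hθs : 0 < θs) (hw1s : w1s ∈ Set.Ioo (1/2 : ℝ) 1)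
    (hw1 : w1 ∈ Set.Ioo (1/2 : ℝ) w1s) (hy : 0 < y) :
    0 < (w1s + w1 - 1) *
        (Real.exp (y * θs * (1 - (2 * w1s - 1) / (2 * w1 - 1))) -
         Real.exp (-(y * θs * (1 - (2 * w1s - 1) / (2 * w1 - 1))))) +
      (w1s - w1) *
        (Real.exp (y * θs * (1 + (2 * w1s - 1) / (2 * w1 - 1))) -
         Real.exp (-(y * θs * (1 + (2 * w1s - 1) / (2 * w1 - 1))))) := by
  obtain ⟨hw1s1, hw1s2⟩ := hw1s
  obtain ⟨hw11, hw12⟩ := hw1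
  set γ : ℝ := (2 * w1s - 1) / (2 * w1 - 1) with hγdef
  have hden : 0 < 2 * w1 - 1 := by linarith
  have hγ : 1 < γ := by
    rw [hγdef, lt_div_iff₀ hden]; linarith
  have ha : 0 < y * θs := mul_pos hy hθs
  set u : ℝ := y * θs * (γ - 1) with hudef
  set v : ℝ := y * θs * (γ + 1) with hvdef
  have hu : 0 < u := by apply mul_pos ha; linarith
  have huv : u < v := by
    rw [hudef, hvdef]
    apply (mul_lt_mul_iff_right₀ ha).2; linarith
  have hA : 0 < w1s + w1 - 1 := by linarith
  have hB : 0 < w1s - w1 := by linarith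
  -- key identity: A * u = B * v
  have hid : (w1s + w1 - 1) * u = (w1s - w1) * v := by
    rw [hudef, hvdef, hγdef]
    rw [div_sub_one hden.ne', div_add_one hden.ne']
    ring
  have hkey := key_sinh hu huv
  -- from key: A * sinh u < B * sinh v
  have hmain : (w1s + w1 - 1) * Real.sinh u < (w1s - w1) * Real.sinh v := by
    have h1 : (w1s + w1 - 1) * (v * Real.sinh u) < (w1s + w1 - 1) * (u * Real.sinh v) :=
      (mul_lt_mul_iff_right₀ hA).2 hkey
    have h2 : (w1s + w1 - 1) * (u * Real.sinh v) = (w1s - w1) * v * Real.sinh v := by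
      rw [← hid]; ring
    have hv : 0 < v := hu.trans huv
    nlinarith [Real.sinh_pos_iff.2 hu, Real.sinh_pos_iff.2 (hu.trans huv)]
  -- rewrite goal in terms of sinh
  have e1 : y * θs * (1 - γ) = -u := by rw [hudef]; ring
  have e2 : y * θs * (1 + γ) = v := by rw [hvdef]; ring
  rw [e1, e2]
  have s1 : Real.exp (-u) - Real.exp (-(-u)) = -(2 * Real.sinh u) := by
    rw [Real.sinh_eq]; ring
  have s2 : Real.exp v - Real.exp (-v) = 2 * Real.sinh v := by
    rw [Real.sinh_eq]; ring
  rw [s1, s2]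
  nlinarith [hmain]
end

section
/- For every integer k ≥ 1 and every b ∈ (0,1), the inequality (1 − b)·(2b + 1)^{2k+1} + (1 + b)·(2b − 1)^{2k+1} ≥ 2b holds, with strict inequality when k ≥ 2. -/
lemma stmt_13_aux (b : ℝ) (hb0 : 0 < b) (hb1 : b < 1) :
    ∀ k, 1 ≤ k → 2 * b < (1 - b) * (2 * b + 1) ^ (2 * k + 1) + (1 + b) * (2 * b - 1) ^ (2 * k + 1) := by
  intro k hk
  induction k with
  | zero => omega
  | succ n ih =>
    rcases Nat.eq_or_lt_of_le hk with h1 | h1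
    · -- n + 1 = 1, i.e. n = 0
      have hn : n = 0 := by omega
      subst hn
      norm_num
      nlinarith [sq_nonneg b, mul_pos hb0 (sub_pos.mpr hb1)]
    · have hn : 1 ≤ n := by omega
      have ih' := ih hn
      have hAB : (2 * b - 1) ^ (2 * n + 1) ≤ (2 * b + 1) ^ (2 * n + 1) := by
        exact ((Odd.strictMono_pow (R := ℝ) ⟨n, by ring⟩).monotone (by linarith : 2 * b - 1 ≤ 2 * b + 1))
      have e1 : (2 * b + 1) ^ (2 * (n + 1) + 1)
          = (2 * b + 1) ^ (2 * n + 1) * (2 * b + 1) ^ 2 := by ring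
      have e2 : (2 * b - 1) ^ (2 * (n + 1) + 1)
          = (2 * b - 1) ^ (2 * n + 1) * (2 * b - 1) ^ 2 := by ring
      rw [e1, e2]
      nlinarith [mul_pos hb0 (mul_pos (sub_pos.mpr hb1) (by linarith : (0:ℝ) < 1 + b)),
        mul_nonneg (mul_nonneg (mul_nonneg hb0.le (sub_pos.mpr hb1).le) (by linarith : (0:ℝ) ≤ 1 + b)) (sub_nonneg.mpr hAB)]

theorem stmt_13 (k : ℕ) (hk : 1 ≤ k) (b : ℝ) (hb : b ∈ Set.Ioo (0:ℝ) 1) :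
    2 * b ≤ (1 - b) * (2 * b + 1) ^ (2 * k + 1) + (1 + b) * (2 * b - 1) ^ (2 * k + 1) ∧
    (2 ≤ k → 2 * b < (1 - b) * (2 * b + 1) ^ (2 * k + 1) + (1 + b) * (2 * b - 1) ^ (2 * k + 1)) := by
  obtain ⟨hb0, hb1⟩ := hb
  have h := stmt_13_aux b hb0 hb1 k hk
  exact ⟨h.le, fun _ => h⟩
end

section
/- Let w1* ∈ (1/2, 1), w2* = 1 − w1*, and θ* > 0. The equation 1 − w1*·e^{−4 w2* (w1* − w2*) s²} − w2*·e^{4 w1* (w1* − w2*) s²} = 0 in s ≥ 0 has s = 0 as its unique solution; moreover the left-hand side is strictly decreasing in s for s > 0. -/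
theorem stmt_14 (w1s : ℝ) (hw1s : w1s ∈ Set.Ioo (1/2 : ℝ) 1) (θs : ℝ) (hθs : 0 < θs) :
    (∀ s : ℝ, 0 ≤ s →
      (1 - w1s * Real.exp (-(4 * (1 - w1s) * (w1s - (1 - w1s)) * s ^ 2)) -
        (1 - w1s) * Real.exp (4 * w1s * (w1s - (1 - w1s)) * s ^ 2) = 0 ↔ s = 0)) ∧
    StrictAntiOn (fun s : ℝ =>
      1 - w1s * Real.exp (-(4 * (1 - w1s) * (w1s - (1 - w1s)) * s ^ 2)) -
        (1 - w1s) * Real.exp (4 * w1s * (w1s - (1 - w1s)) * s ^ 2)) (Set.Ici 0) := by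
  obtain ⟨h1, h2⟩ := hw1s
  set A : ℝ := 4 * (1 - w1s) * (w1s - (1 - w1s)) with hA
  set B : ℝ := 4 * w1s * (w1s - (1 - w1s)) with hB
  have hδ : 0 < w1s - (1 - w1s) := by linarith
  have hw1pos : 0 < w1s := by linarith
  have hw2pos : 0 < 1 - w1s := by linarith
  have hApos : 0 < A := by
    have := mul_pos (mul_pos (by norm_num : (0:ℝ) < 4) hw2pos) hδ
    simpa [hA, mul_assoc] using this
  have hBpos : 0 < B := by
    have := mul_pos (mul_pos (by norm_num : (0:ℝ) < 4) hw1pos) hδ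
    simpa [hB, mul_assoc] using this
  set f : ℝ → ℝ := fun s =>
      1 - w1s * Real.exp (-(A * s ^ 2)) - (1 - w1s) * Real.exp (B * s ^ 2) with hf
  have hderiv : ∀ s : ℝ, HasDerivAt f
      (w1s * (A * (2 * s)) * Real.exp (-(A * s ^ 2)) -
        (1 - w1s) * (B * (2 * s)) * Real.exp (B * s ^ 2)) s := by
    intro s
    have hsq : HasDerivAt (fun s : ℝ => s ^ 2) (2 * s) s := by
      simpa using hasDerivAt_pow 2 s
    have hA' : HasDerivAt (fun s : ℝ => -(A * s ^ 2)) (-(A * (2 * s))) s :=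
      (hsq.const_mul A).neg
    have hB' : HasDerivAt (fun s : ℝ => B * s ^ 2) (B * (2 * s)) s :=
      hsq.const_mul B
    have e1 : HasDerivAt (fun s : ℝ => w1s * Real.exp (-(A * s ^ 2)))
        (w1s * (Real.exp (-(A * s ^ 2)) * (-(A * (2 * s))))) s :=
      (hA'.exp).const_mul w1s
    have e2 : HasDerivAt (fun s : ℝ => (1 - w1s) * Real.exp (B * s ^ 2))
        ((1 - w1s) * (Real.exp (B * s ^ 2) * (B * (2 * s)))) s :=
      (hB'.exp).const_mul (1 - w1s)
    have := ((hasDerivAt_const s (1 : ℝ)).sub e1).sub e2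
    refine this.congr_deriv ?_
    ring
  have hderivneg : ∀ s : ℝ, 0 < s →
      (w1s * (A * (2 * s)) * Real.exp (-(A * s ^ 2)) -
        (1 - w1s) * (B * (2 * s)) * Real.exp (B * s ^ 2)) < 0 := by
    intro s hs
    have hexp : Real.exp (-(A * s ^ 2)) < Real.exp (B * s ^ 2) := by
      apply Real.exp_lt_exp.2
      nlinarith [sq_nonneg s, mul_pos hApos (mul_pos hs hs)]
    have hcoef : w1s * A = (1 - w1s) * B := by rw [hA, hB]; ring
    have hC : 0 < w1s * A * (2 * s) := by positivity
    have key := mul_lt_mul_of_pos_left hexp hC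
    have heq : (1 - w1s) * (B * (2 * s)) * Real.exp (B * s ^ 2) =
        w1s * A * (2 * s) * Real.exp (B * s ^ 2) := by linear_combination (-(2 * s * Real.exp (B * s ^ 2))) * hcoef
    linarith [key, heq]
  have hanti : StrictAntiOn f (Set.Ici 0) := by
    apply strictAntiOn_of_deriv_neg (convex_Ici 0)
    · exact Continuous.continuousOn (by fun_prop)
    · intro x hx
      rw [interior_Ici] at hx
      rw [(hderiv x).deriv]
      exact hderivneg x hx
  have hf0 : f 0 = 0 := by simp [hf]
  refine ⟨?_, hanti⟩
  intro s hs
  constructor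
  · intro h
    by_contra hne
    have hspos : 0 < s := lt_of_le_of_ne hs (Ne.symm hne)
    have := hanti (Set.self_mem_Ici) (Set.mem_Ici.2 hs) hspos
    rw [hf0] at this
    exact absurd h (ne_of_lt this)
  · intro h; rw [h]; simpa using hf0
end
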